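/- Let i_x = ⌊n x/(x+1)⌋. There exists N such that for all n ≥ N and all real x with (log n)/(6n) ≤ x ≤ 1: (a) Σ_{i : |i − i_x| > i_x^{3/4}, i ≤ 60 i_x} C(n,i)^2 x^{2i} ≤ (1/(nx)) · C(n,i_x)^2 x^{2 i_x}, and (b) Σ_{i : 60 i_x < i ≤ n} C(n,i)^2 x^{2i} ≤ n^{−1/5} · C(n,i_x)^2 x^{2 i_x}. -/

import Mathlib

open Real
open scoped Classical

noncomputable def idx (n : ℕ) (x : ℝ) : ℕ := ⌊(n : ℝ) * x / (x + 1)⌋₊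

private lemma exp_poly_bound {y : ℝ} (hy : 0 ≤ y) : (y/5)^5 ≤ Real.exp y := by
  have h1 : (0:ℝ) ≤ y/5 := by linarith
  have h2 : y/5 ≤ Real.exp (y/5) := by
    have := Real.add_one_le_exp (y/5); linarith
  calc (y/5)^5 ≤ (Real.exp (y/5))^5 := pow_le_pow_left₀ h1 h2 5
    _ = Real.exp y := by
        rw [← Real.exp_nat_mul]
        norm_num
        ring_nf

private lemma geom_decay (a : ℕ → ℝ) (ha : ∀ i, 0 ≤ a i) (i0 : ℕ) (ρ : ℝ) (hρ : 0 ≤ ρ)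
    (h : ∀ i, i0 ≤ i → a (i+1) ≤ ρ * a i) : ∀ k, a (i0 + k) ≤ ρ^k * a i0 := by
  intro k
  induction k with
  | zero => simp
  | succ k ih =>
    have h2 := h (i0 + k) (Nat.le_add_right _ _)
    calc a (i0 + (k+1)) = a ((i0 + k) + 1) := by ring_nf
      _ ≤ ρ * a (i0 + k) := h2
      _ ≤ ρ * (ρ^k * a i0) := mul_le_mul_of_nonneg_left ih hρ
      _ = ρ^(k+1) * a i0 := by ring

private lemma geom_grow (a : ℕ → ℝ) (i0 : ℕ) (ρ : ℝ) (hρ : 0 ≤ ρ)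
    (h : ∀ i, i + 1 ≤ i0 → a i ≤ ρ * a (i+1)) : ∀ k, k ≤ i0 → a (i0 - k) ≤ ρ^k * a i0 := by
  intro k
  induction k with
  | zero => intro _; simp
  | succ k ih =>
    intro hk
    have hk' : k ≤ i0 := by omega
    have e : i0 - (k+1) + 1 = i0 - k := by omega
    have h1 : a (i0 - (k+1)) ≤ ρ * a (i0 - k) := by
      have := h (i0 - (k+1)) (by omega)
      rwa [e] at this
    calc a (i0 - (k+1)) ≤ ρ * a (i0 - k) := h1
      _ ≤ ρ * (ρ^k * a i0) := mul_le_mul_of_nonneg_left (ih hk') hρ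
      _ = ρ^(k+1) * a i0 := by ring

private lemma geom_series_le (K : ℕ) : ∑ j ∈ Finset.range K, ((1:ℝ)/4)^j ≤ 4/3 := by
  have h4 : (0:ℝ) ≤ (1/4:ℝ)^K := by positivity
  rw [geom_sum_eq (by norm_num : (1/4:ℝ) ≠ 1) K]
  rw [div_le_iff_of_neg (by norm_num : (1/4:ℝ) - 1 < 0)]
  linarith



private lemma arith_sq {q M : ℝ} (h2 : (q^2)^2 = M) (h1 : (777600000000:ℝ)^2 ≤ M) :
    (777600000000:ℝ) ≤ q^2 := by
  by_contra hcon
  push_neg at hcon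
  have h3 : q^2*q^2 ≤ 777600000000*q^2 := mul_le_mul_of_nonneg_right hcon.le (sq_nonneg q)
  have h4 : (777600000000:ℝ)*q^2 < 777600000000^2 := by nlinarith [sq_nonneg q]
  nlinarith

private lemma arith_q3 {q : ℝ} (h0 : 0 < q) (h : (777600000000:ℝ) ≤ q^2) : 3 ≤ q := by
  nlinarith

private lemma cube27 {q : ℝ} (hq : 3 ≤ q) : 27 ≤ q^3 := by
  have h1 : (0:ℝ) ≤ q - 3 := by linarith
  have h2 : (9:ℝ) ≤ q^2 := by nlinarith
  have h3 : (0:ℝ) ≤ (q-3)*q^2 := mul_nonneg h1 (sq_nonneg q)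
  nlinarith [h3, h2]

private lemma q4_lb {q : ℝ} (hq : 3 ≤ q) : q^3 + 54 ≤ q^4 := by
  have hq3 : (27:ℝ) ≤ q^3 := cube27 hq
  have h1 : q^3*2 ≤ q^3*(q-1) :=
    mul_le_mul_of_nonneg_left (by linarith) (by positivity)
  nlinarith [h1, hq3]

private lemma arith_T {q T : ℝ} (hq : 3 ≤ q) (hT2 : T ≤ q^3+1) : T ≤ q^4 := by
  have := q4_lb hq
  linarith

private lemma arith_T27 {q T : ℝ} (hq : 3 ≤ q) (hT1 : q^3 < T) : 27 < T := by
  have := cube27 hq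
  linarith

private lemma arith_block {q M S R T : ℝ} (hq : 3 ≤ q) (hM : q^4 = M) (hT1 : q^3 < T)
    (hT2 : T ≤ q^3+1) (h1 : T - 1 ≤ 2*S) (h2 : 2*S ≤ T) (hSR : S + R = T) :
    q^2/12 ≤ 2*R*(S-1)/(M+S+1) ∧ q^2/12 ≤ 2*R*S/M ∧ S ≤ M := by
  subst hM
  have hq3 : (27:ℝ) ≤ q^3 := cube27 hq
  have hq2 : (0:ℝ) ≤ q^2 := sq_nonneg q
  have hq4' : q^3 + 54 ≤ q^4 := q4_lb hq
  have hq6 : 27*q^3 ≤ q^3*q^3 := mul_le_mul_of_nonneg_right hq3 (by positivity)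
  have hS1 : (q^3-3)/2 ≤ S - 1 := by linarith
  have hR : q^3/2 ≤ R := by linarith
  have hSM : S ≤ q^4 := by linarith
  have hMpos : (0:ℝ) < q^4 := by positivity
  have hden : (0:ℝ) < q^4 + S + 1 := by linarith
  have hden_ub : q^4 + S + 1 ≤ 2*q^4 := by linarith
  have hkey := mul_le_mul_of_nonneg_left hden_ub hq2
  refine ⟨?_, ?_, hSM⟩
  · rw [div_le_div_iff₀ (by norm_num) hden]
    have hfac : q^3/2 * ((q^3-3)/2) ≤ R * (S-1) :=
      mul_le_mul hR hS1 (by linarith) (by linarith)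
    nlinarith [hfac, hkey, hq6]
  · rw [div_le_div_iff₀ (by norm_num) hMpos]
    have hfac : q^3/2 * ((q^3-1)/2) ≤ R * S :=
      mul_le_mul hR (by linarith) (by linarith) (by linarith)
    nlinarith [hfac, hq6]

private lemma arith_num {q M : ℝ} (hM : (q^2)^2 = M) (hbig : (777600000000:ℝ) ≤ q^2) :
    1000*M^2 ≤ (q^2/60)^5 := by
  have h0 : (0:ℝ) ≤ q^2 := sq_nonneg q
  have h8 : M^2 = (q^2)^4 := by rw [← hM]; ring
  rw [h8]
  have h4 : (0:ℝ) ≤ (q^2)^4 := by positivity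
  have := mul_le_mul_of_nonneg_right hbig h4
  nlinarith

private lemma arith_a {M y : ℝ} (hM : 1 ≤ M) (h : y ≤ 2*(M+1)) (hy : 0 ≤ y) :
    (60*M+2)*y ≤ 250*M^2 := by nlinarith

set_option maxHeartbeats 1000000 in
theorem stmt_18 :
    ∃ N : ℕ, ∀ n : ℕ, N ≤ n → ∀ x : ℝ,
      Real.log n / (6 * n) ≤ x → x ≤ 1 →
      ((∑ i ∈ (Finset.range (n + 1)).filter
            (fun i : ℕ => (idx n x : ℝ) ^ ((3 : ℝ) / 4) < |(i : ℝ) - (idx n x : ℝ)| ∧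
              (i : ℝ) ≤ 60 * (idx n x : ℝ)),
          (n.choose i : ℝ) ^ 2 * x ^ (2 * i)) ≤
        1 / ((n : ℝ) * x) * ((n.choose (idx n x) : ℝ) ^ 2 * x ^ (2 * idx n x))) ∧
      ((∑ i ∈ (Finset.range (n + 1)).filter
            (fun i : ℕ => 60 * (idx n x : ℝ) < (i : ℝ)),
          (n.choose i : ℝ) ^ 2 * x ^ (2 * i)) ≤
        (n : ℝ) ^ (-(1 : ℝ) / 5) * ((n.choose (idx n x) : ℝ) ^ 2 * x ^ (2 * idx n x))) := by
  set C0 : ℝ := 777600000000^2 with hC0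
  refine ⟨⌈Real.exp (12 * (C0 + 1))⌉₊, ?_⟩
  intro n hn x hxlo hx1
  -- basic facts about n
  have hCpos : (0:ℝ) < 12 * (C0 + 1) := by positivity
  have hNn : Real.exp (12 * (C0 + 1)) ≤ (n : ℝ) :=
    le_trans (Nat.le_ceil _) (by exact_mod_cast hn)
  have hn0 : (0:ℝ) < n := lt_of_lt_of_le (Real.exp_pos _) hNn
  have hlogn : 12 * (C0 + 1) ≤ Real.log n := (Real.le_log_iff_exp_le hn0).mpr hNn
  have hlogpos : 0 < Real.log n := lt_of_lt_of_le hCpos hlogn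
  have hx0 : 0 < x := lt_of_lt_of_le (div_pos hlogpos (by positivity)) hxlo
  have hxp1 : (0:ℝ) < x + 1 := by linarith
  set m : ℕ := idx n x with hmdef
  set M : ℝ := (m : ℝ) with hMdef
  have hfloor_le : M ≤ (n:ℝ) * x / (x + 1) := Nat.floor_le (by positivity)
  have hfloor_gt : (n:ℝ) * x / (x + 1) < M + 1 := Nat.lt_floor_add_one _
  have key1 : (n:ℝ) * x < (M + 1) * (x + 1) := by
    rw [div_lt_iff₀ hxp1] at hfloor_gt; linarith
  have key2 : M * (x + 1) ≤ (n:ℝ) * x := by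
    rw [le_div_iff₀ hxp1] at hfloor_le; linarith
  have hMn : M ≤ (n:ℝ) := by nlinarith
  have hmn : m ≤ n := by
    have h := hMn; rw [hMdef] at h; exact_mod_cast h
  have castsub : ((n - m : ℕ) : ℝ) = (n:ℝ) - M := by
    rw [Nat.cast_sub hmn]
  have hA : ((n - m : ℕ) : ℝ) * x ≤ M + 2 := by
    rw [castsub]; nlinarith
  have hB : M ≤ ((n - m : ℕ) : ℝ) * x := by
    rw [castsub]; nlinarith
  have hlog6 : Real.log n / 6 ≤ (n:ℝ) * x := by
    have : (n:ℝ) * (Real.log n / (6 * n)) = Real.log n / 6 := by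
      field_simp
    nlinarith [mul_le_mul_of_nonneg_left hxlo (le_of_lt hn0)]
  have hMlog : Real.log n ≤ 12 * (M + 1) := by
    have h1 : Real.log n / 12 ≤ (n:ℝ) * x / 2 := by linarith
    have h2 : (n:ℝ) * x / 2 ≤ (n:ℝ) * x / (x+1) := by
      apply div_le_div_of_nonneg_left (by positivity) hxp1 (by linarith)
    linarith
  have hMC0 : C0 ≤ M := by linarith
  have hC0big : (600000000000000000000000 : ℝ) ≤ C0 := by norm_num [hC0]
  have hM0 : (0:ℝ) < M := by linarith
  have hM1 : (1:ℝ) ≤ M := by linarith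
  have hnx0 : (0:ℝ) < (n:ℝ) * x := by positivity
  have hnx2 : (n:ℝ) * x ≤ 2 * (M + 1) := by nlinarith
  -- the sequence
  set a : ℕ → ℝ := fun i => ((n.choose i : ℝ))^2 * x^(2*i) with hadef
  have ha_nonneg : ∀ i, 0 ≤ a i := by intro i; positivity
  have ham_pos : 0 < a m := by
    have hc : 0 < (n.choose m : ℝ) := by exact_mod_cast Nat.choose_pos hmn
    exact mul_pos (pow_pos hc 2) (pow_pos hx0 _)
  have ident : ∀ i, a (i+1) * ((i:ℝ)+1)^2 = a i * (((n - i : ℕ) : ℝ) * x)^2 := by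
    intro i
    have h := Nat.choose_succ_right_eq n i
    have h' : (n.choose (i+1) : ℝ) * ((i:ℝ)+1) = (n.choose i : ℝ) * ((n - i : ℕ) : ℝ) := by
      exact_mod_cast h
    simp only [hadef]
    have he : 2*(i+1) = 2*i + 2 := by ring
    rw [he, pow_add]
    linear_combination (x^(2*i) * x^2 *
      ((n.choose (i+1) : ℝ) * ((i:ℝ)+1) + (n.choose i : ℝ) * ((n - i : ℕ) : ℝ))) * h'
  have step_up : ∀ i, m ≤ i → a (i+1) * ((i:ℝ)+1)^2 ≤ a i * (M+2)^2 := by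
    intro i hi
    rw [ident i]
    have h1 : ((n - i : ℕ) : ℝ) ≤ ((n - m : ℕ) : ℝ) := by
      exact_mod_cast Nat.sub_le_sub_left hi n
    have h2 : (0:ℝ) ≤ ((n - i : ℕ) : ℝ) * x := by positivity
    have h3 : ((n - i : ℕ) : ℝ) * x ≤ M + 2 :=
      le_trans (mul_le_mul_of_nonneg_right h1 hx0.le) hA
    exact mul_le_mul_of_nonneg_left (pow_le_pow_left₀ h2 h3 2) (ha_nonneg i)
  have ratio_up : ∀ i, m ≤ i → a (i+1) ≤ ((M+2)/((i:ℝ)+1))^2 * a i := by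
    intro i hi
    have hpos : (0:ℝ) < ((i:ℝ)+1)^2 := by positivity
    rw [div_pow, div_mul_eq_mul_div, le_div_iff₀ hpos, mul_comm ((M+2)^2) (a i)]
    exact step_up i hi
  have rub : ∀ i, m ≤ i → ∀ c : ℝ, ((M+2)/((i:ℝ)+1))^2 ≤ c → a (i+1) ≤ c * a i := by
    intro i hi c hc
    exact le_trans (ratio_up i hi) (mul_le_mul_of_nonneg_right hc (ha_nonneg i))
  have ratio_down : ∀ i, i+1 ≤ m → a i ≤ (((i:ℝ)+1)/M)^2 * a (i+1) := by
    intro i hi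
    have h1 : ((n - m : ℕ) : ℝ) ≤ ((n - i : ℕ) : ℝ) := by
      have : n - m ≤ n - i := Nat.sub_le_sub_left (by omega) n
      exact_mod_cast this
    have h2 : M ≤ ((n - i : ℕ) : ℝ) * x :=
      le_trans hB (mul_le_mul_of_nonneg_right h1 hx0.le)
    have h3 : a i * M^2 ≤ a (i+1) * ((i:ℝ)+1)^2 := by
      rw [ident i]
      exact mul_le_mul_of_nonneg_left (pow_le_pow_left₀ hM0.le h2 2) (ha_nonneg i)
    have hpos : (0:ℝ) < M^2 := by positivity
    rw [div_pow, div_mul_eq_mul_div, le_div_iff₀ hpos]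
    nlinarith [h3]
  have rdown : ∀ i, i+1 ≤ m → ∀ c : ℝ, (((i:ℝ)+1)/M)^2 ≤ c → a i ≤ c * a (i+1) := by
    intro i hi c hc
    exact le_trans (ratio_down i hi) (mul_le_mul_of_nonneg_right hc (ha_nonneg (i+1)))
  -- global monotonicity
  have a_le_of_ge : ∀ i j, m+1 ≤ i → i ≤ j → a j ≤ a i := by
    intro i j hi hij
    have h := geom_decay a ha_nonneg i 1 (by norm_num) (fun i' hi' => by
      apply rub i' (by omega) 1
      have hcast : M + 2 ≤ (i':ℝ) + 1 := by
        have : ((m:ℕ):ℝ) + 1 ≤ (i' : ℝ) := by exact_mod_cast hi.trans hi'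
        linarith
      have hd : (M+2)/((i':ℝ)+1) ≤ 1 := (div_le_one (by linarith)).mpr hcast
      calc ((M+2)/((i':ℝ)+1))^2 ≤ 1^2 := pow_le_pow_left₀ (by positivity) hd 2
        _ = 1 := one_pow 2) (j - i)
    have : i + (j - i) = j := by omega
    rw [this] at h; simpa using h
  have a_le_of_le : ∀ i j, i ≤ j → j ≤ m → a i ≤ a j := by
    intro i j hij hj
    have h := geom_grow a j 1 (by norm_num) (fun i' hi' => by
      apply rdown i' (by omega) 1
      have hcast : (i':ℝ) + 1 ≤ M := by
        have : ((i':ℕ):ℝ) + 1 ≤ ((m:ℕ):ℝ) := by exact_mod_cast hi'.trans hj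
        linarith
      have hd : ((i':ℝ)+1)/M ≤ 1 := (div_le_one hM0).mpr hcast
      calc (((i':ℝ)+1)/M)^2 ≤ 1^2 := pow_le_pow_left₀ (by positivity) hd 2
        _ = 1 := one_pow 2) (j - i) (by omega)
    have : j - (j - i) = i := by omega
    rw [this] at h; simpa using h
  have ham1 : a (m+1) ≤ 4 * a m := by
    apply rub m le_rfl 4
    have hd : (M+2)/(M+1) ≤ 2 := by
      rw [div_le_iff₀ (by linarith)]; linarith
    have : ((M+2)/((m:ℝ)+1))^2 ≤ 2^2 := pow_le_pow_left₀ (by positivity) hd 2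
    norm_num at this ⊢; exact this
  -- T, s, r, q
  set q : ℝ := M ^ ((1:ℝ)/4) with hqdef
  have hq0 : 0 < q := Real.rpow_pos_of_pos hM0 _
  have hq4 : q^(4:ℕ) = M := by
    rw [hqdef, ← Real.rpow_natCast (M ^ ((1:ℝ)/4)) 4, ← Real.rpow_mul hM0.le]
    norm_num
  have hq3 : M ^ ((3:ℝ)/4) = q^(3:ℕ) := by
    rw [hqdef, ← Real.rpow_natCast (M ^ ((1:ℝ)/4)) 3, ← Real.rpow_mul hM0.le]
    norm_num
  have hq22 : (q^2)^2 = M := by rw [← hq4]; ring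
  have hqbig : (777600000000 : ℝ) ≤ q^2 := by
    apply arith_sq hq22
    rw [hC0] at hMC0; exact hMC0
  have hq3b : (3:ℝ) ≤ q := arith_q3 hq0 hqbig
  clear hMC0 hC0big hlogn hCpos hNn hn
  set T : ℕ := ⌊M ^ ((3:ℝ)/4)⌋₊ + 1 with hTdef
  have hT_gt : q^(3:ℕ) < (T:ℝ) := by
    rw [hTdef, ← hq3]
    push_cast
    exact Nat.lt_floor_add_one _
  have hT_le : (T:ℝ) ≤ q^(3:ℕ) + 1 := by
    rw [hTdef, ← hq3]
    push_cast
    have := Nat.floor_le (a := M ^ ((3:ℝ)/4)) (by positivity)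
    linarith
  have hTM : (T:ℝ) ≤ M := by
    have := arith_T hq3b hT_le
    rw [hq4] at this; exact this
  have hTm : T ≤ m := by exact_mod_cast hMdef ▸ hTM
  have hT28 : 28 ≤ T := by
    have h27 : (27:ℝ) < (T:ℝ) := arith_T27 hq3b hT_gt
    exact_mod_cast Nat.succ_le_of_lt (by exact_mod_cast h27)
  set s : ℕ := T / 2 with hsdef
  set r : ℕ := T - s with hrdef
  have hsr : s + r = T := by omega
  have hs1 : 1 ≤ s := by omega
  have hr1 : 1 ≤ r := by omega
  have hsrR : (s:ℝ) + (r:ℝ) = (T:ℝ) := by exact_mod_cast hsr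
  have h2s_le : 2*(s:ℝ) ≤ (T:ℝ) := by
    have h : 2*s ≤ T := by omega
    exact_mod_cast h
  have h2s_ge : (T:ℝ) - 1 ≤ 2*(s:ℝ) := by
    have h : T ≤ 2*s + 1 := by omega
    have h2 : (T:ℝ) ≤ 2*(s:ℝ)+1 := by exact_mod_cast h
    linarith
  obtain ⟨EXP, EXPL, hsM⟩ :=
    arith_block hq3b hq4 hT_gt hT_le h2s_ge h2s_le hsrR
  -- tail decay bounds
  set D : ℝ := M + (s:ℝ) + 1 with hDdef
  have hDpos : (0:ℝ) < D := by positivity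
  set ρR : ℝ := ((M+2)/D)^2 with hρRdef
  set ρL : ℝ := ((M-(s:ℝ))/M)^2 with hρLdef
  have hρR_exp : ρR^r ≤ Real.exp (-(q^2/12)) := by
    have hu : (M+2)/D = 1 - ((s:ℝ)-1)/D := by
      field_simp
      rw [hDdef]
      ring
    have hu1 : (0:ℝ) ≤ (M+2)/D := by positivity
    have hu2 : (M+2)/D ≤ Real.exp (-(((s:ℝ)-1)/D)) := by
      rw [hu]
      have := Real.add_one_le_exp (-(((s:ℝ)-1)/D))
      linarith
    have h1 : ρR^r ≤ (Real.exp (-(((s:ℝ)-1)/D)))^(2*r) := by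
      rw [hρRdef, ← pow_mul]
      exact pow_le_pow_left₀ hu1 hu2 (2*r)
    have h2 : (Real.exp (-(((s:ℝ)-1)/D)))^(2*r) = Real.exp (-(2*(r:ℝ)*((s:ℝ)-1)/D)) := by
      rw [← Real.exp_nat_mul]
      congr 1
      push_cast
      ring
    rw [h2] at h1
    refine h1.trans (Real.exp_le_exp.mpr (by rw [hDdef]; linarith [EXP]))
  have hρL_exp : ρL^r ≤ Real.exp (-(q^2/12)) := by
    have hu : (M-(s:ℝ))/M = 1 - (s:ℝ)/M := by field_simp
    have hu1 : (0:ℝ) ≤ (M-(s:ℝ))/M := div_nonneg (by linarith) hM0.le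
    have hu2 : (M-(s:ℝ))/M ≤ Real.exp (-((s:ℝ)/M)) := by
      rw [hu]
      have := Real.add_one_le_exp (-((s:ℝ)/M))
      linarith
    have h1 : ρL^r ≤ (Real.exp (-((s:ℝ)/M)))^(2*r) := by
      rw [hρLdef, ← pow_mul]
      exact pow_le_pow_left₀ hu1 hu2 (2*r)
    have h2 : (Real.exp (-((s:ℝ)/M)))^(2*r) = Real.exp (-(2*(r:ℝ)*(s:ℝ)/M)) := by
      rw [← Real.exp_nat_mul]
      congr 1
      push_cast
      ring
    rw [h2] at h1
    refine h1.trans (Real.exp_le_exp.mpr (by linarith [EXPL]))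
  have hexp_small : Real.exp (-(q^2/12)) ≤ 1/(1000*M^2) := by
    have e1 : (q^2/60)^5 ≤ Real.exp (q^2/12) := by
      have h := exp_poly_bound (y := q^2/12) (by positivity)
      have he : q^2/12/5 = q^2/60 := by ring
      rwa [he] at h
    have e3 : 1000*M^2 ≤ Real.exp (q^2/12) := le_trans (arith_num hq22 hqbig) e1
    rw [Real.exp_neg, one_div]
    exact inv_anti₀ (by positivity) e3
  -- the two tail bounds
  have TailR : a (m+T) ≤ 1/(250*M^2) * a m := by
    have hblockR := geom_decay a ha_nonneg (m+s) ρR (by positivity) (fun i hi => by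
      apply rub i (by omega) ρR
      have hci : M + (s:ℝ) ≤ (i:ℝ) := by
        have : ((m+s:ℕ):ℝ) ≤ (i:ℝ) := by exact_mod_cast hi
        push_cast at this
        linarith
      have hd2 : (M+2)/((i:ℝ)+1) ≤ (M+2)/D := by
        rw [div_le_div_iff₀ (by linarith) hDpos]
        have hDle : D ≤ (i:ℝ)+1 := by rw [hDdef]; linarith
        exact mul_le_mul_of_nonneg_left hDle (by linarith)
      rw [hρRdef]
      exact pow_le_pow_left₀ (by positivity) hd2 2) r
    have e : m + s + r = m + T := by omega
    rw [e] at hblockR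
    have hms : a (m+s) ≤ 4 * a m :=
      le_trans (a_le_of_ge (m+1) (m+s) le_rfl (by omega)) ham1
    calc a (m+T) ≤ ρR^r * a (m+s) := hblockR
      _ ≤ ρR^r * (4 * a m) := mul_le_mul_of_nonneg_left hms (by positivity)
      _ ≤ (1/(1000*M^2)) * (4 * a m) :=
          mul_le_mul_of_nonneg_right (le_trans hρR_exp hexp_small) (by positivity)
      _ = 1/(250*M^2) * a m := by ring
  have TailL : a (m-T) ≤ 1/(250*M^2) * a m := by
    have hcastms : ((m-s:ℕ):ℝ) = M - (s:ℝ) := by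
      rw [hMdef, Nat.cast_sub (by omega)]
    have hblockL := geom_grow a (m-s) ρL (by positivity) (fun i hi => by
      apply rdown i (by omega) ρL
      have hci : (i:ℝ)+1 ≤ M - (s:ℝ) := by
        rw [← hcastms]
        have : ((i+1:ℕ):ℝ) ≤ ((m-s:ℕ):ℝ) := by exact_mod_cast hi
        push_cast at this ⊢
        linarith
      rw [hρLdef]
      apply pow_le_pow_left₀ (by positivity) ((div_le_div_iff_of_pos_right hM0).mpr hci) 2) r (by omega)
    have e : m - s - r = m - T := by omega
    rw [e] at hblockL
    have hms : a (m-s) ≤ a m := a_le_of_le (m-s) m (by omega) le_rfl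
    calc a (m-T) ≤ ρL^r * a (m-s) := hblockL
      _ ≤ ρL^r * a m := mul_le_mul_of_nonneg_left hms (by positivity)
      _ ≤ (1/(1000*M^2)) * a m :=
          mul_le_mul_of_nonneg_right (le_trans hρL_exp hexp_small) (ha_nonneg m)
      _ ≤ 1/(250*M^2) * a m := by
          apply mul_le_mul_of_nonneg_right _ (ha_nonneg m)
          rw [div_le_div_iff₀ (by positivity) (by positivity)]
          linarith [sq_nonneg M]
  constructor
  · -- part (a)
    have keyA : ∀ i ∈ (Finset.range (n + 1)).filter
        (fun i : ℕ => (m : ℝ) ^ ((3 : ℝ) / 4) < |(i : ℝ) - (m : ℝ)| ∧ (i : ℝ) ≤ 60 * (m : ℝ)),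
        a i ≤ 1/(250*M^2) * a m := by
      intro i hi
      rw [Finset.mem_filter] at hi
      have hirange := hi.1
      have habs := hi.2.1
      have h60 := hi.2.2
      rcases lt_trichotomy i m with hlt | heq | hgt
      · have hcast : ((m-i:ℕ):ℝ) = M - (i:ℝ) := by
          rw [hMdef, Nat.cast_sub (by omega)]
        have habs' : q^(3:ℕ) < ((m-i:ℕ):ℝ) := by
          rw [hcast]
          have hneg : (i:ℝ) - M < 0 := by
            rw [hMdef]
            have : (i:ℝ) < (m:ℝ) := by exact_mod_cast hlt
            linarith
          rw [abs_of_neg hneg] at habs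
          rw [← hq3]
          linarith
        have hTle : T ≤ m - i := by
          have hfl : ((⌊M ^ ((3:ℝ)/4)⌋₊:ℕ):ℝ) < ((m-i:ℕ):ℝ) := by
            have := Nat.floor_le (a := M ^ ((3:ℝ)/4)) (by positivity)
            linarith [this, habs', hq3]
          have : ⌊M ^ ((3:ℝ)/4)⌋₊ < m - i := by exact_mod_cast hfl
          omega
        have : a i ≤ a (m-T) := a_le_of_le i (m-T) (by omega) (by omega)
        exact this.trans TailL
      · exfalso
        rw [heq] at habs
        rw [sub_self, abs_zero] at habs
        have : (0:ℝ) < M ^ ((3:ℝ)/4) := Real.rpow_pos_of_pos hM0 _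
        rw [hMdef] at this
        linarith
      · have hcast : ((i-m:ℕ):ℝ) = (i:ℝ) - M := by
          rw [hMdef, Nat.cast_sub (by omega)]
        have habs' : q^(3:ℕ) < ((i-m:ℕ):ℝ) := by
          rw [hcast]
          have hpos2 : (0:ℝ) ≤ (i:ℝ) - M := by
            rw [hMdef]
            have : (m:ℝ) ≤ (i:ℝ) := by exact_mod_cast hgt.le
            linarith
          rw [abs_of_nonneg hpos2] at habs
          rw [← hq3]
          linarith
        have hTle : T ≤ i - m := by
          have hfl : ((⌊M ^ ((3:ℝ)/4)⌋₊:ℕ):ℝ) < ((i-m:ℕ):ℝ) := by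
            have := Nat.floor_le (a := M ^ ((3:ℝ)/4)) (by positivity)
            linarith [this, habs', hq3]
          have : ⌊M ^ ((3:ℝ)/4)⌋₊ < i - m := by exact_mod_cast hfl
          omega
        have : a i ≤ a (m+T) := a_le_of_ge (m+T) i (by omega) (by omega)
        exact this.trans TailR
    have hsub : (Finset.range (n + 1)).filter
        (fun i : ℕ => (m : ℝ) ^ ((3 : ℝ) / 4) < |(i : ℝ) - (m : ℝ)| ∧ (i : ℝ) ≤ 60 * (m : ℝ))
        ⊆ Finset.range (60*m+2) := by
      intro i hi
      rw [Finset.mem_filter] at hi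
      rw [Finset.mem_range]
      have h60 : (i:ℝ) ≤ 60 * (m:ℝ) := hi.2.2
      have : (i:ℝ) ≤ ((60*m:ℕ):ℝ) := by push_cast; linarith
      have : i ≤ 60*m := by exact_mod_cast this
      omega
    have hsum := Finset.sum_le_card_nsmul _ _ _ keyA
    have hcard := Finset.card_le_card hsub
    rw [Finset.card_range] at hcard
    have hcardR : ((((Finset.range (n + 1)).filter
        (fun i : ℕ => (m : ℝ) ^ ((3 : ℝ) / 4) < |(i : ℝ) - (m : ℝ)| ∧
          (i : ℝ) ≤ 60 * (m : ℝ))).card : ℝ)) ≤ 60*M+2 := by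
      rw [hMdef]
      have := (Nat.cast_le (α := ℝ)).mpr hcard
      push_cast at this ⊢
      linarith
    have harith : (60*M+2)*((n:ℝ)*x) ≤ 250*M^2 := arith_a hM1 hnx2 hnx0.le
    calc (∑ i ∈ (Finset.range (n + 1)).filter
          (fun i : ℕ => (m : ℝ) ^ ((3 : ℝ) / 4) < |(i : ℝ) - (m : ℝ)| ∧
            (i : ℝ) ≤ 60 * (m : ℝ)), a i)
        ≤ _ • (1/(250*M^2) * a m) := hsum
      _ = ((((Finset.range (n + 1)).filter
          (fun i : ℕ => (m : ℝ) ^ ((3 : ℝ) / 4) < |(i : ℝ) - (m : ℝ)| ∧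
            (i : ℝ) ≤ 60 * (m : ℝ))).card : ℝ)) * (1/(250*M^2) * a m) := by
          rw [nsmul_eq_mul]
      _ ≤ (60*M+2) * (1/(250*M^2) * a m) :=
          mul_le_mul_of_nonneg_right hcardR (by positivity)
      _ = ((60*M+2) * (1/(250*M^2))) * a m := by ring
      _ ≤ 1/((n:ℝ)*x) * a m := by
          apply mul_le_mul_of_nonneg_right _ (ha_nonneg m)
          rw [mul_one_div, div_le_div_iff₀ (by positivity) hnx0]
          linarith [harith]
  · -- part (b)
    have decQ : ∀ i, 2*m+3 ≤ i → a (i+1) ≤ (1/4:ℝ) * a i := by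
      intro i hi
      apply rub i (by omega) (1/4)
      have hci : 2*M+4 ≤ (i:ℝ)+1 := by
        have : ((2*m+3:ℕ):ℝ) ≤ (i:ℝ) := by exact_mod_cast hi
        push_cast at this
        rw [hMdef]
        linarith
      have hd2 : (M+2)/((i:ℝ)+1) ≤ 1/2 := by
        rw [div_le_div_iff₀ (by linarith) (by norm_num)]
        linarith
      calc ((M+2)/((i:ℝ)+1))^2 ≤ (1/2)^2 := pow_le_pow_left₀ (by positivity) hd2 2
        _ = 1/4 := by norm_num
    have geomQ := geom_decay a ha_nonneg (2*m+3) (1/4) (by norm_num) decQ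
    have hai0 : a (2*m+3) ≤ 4 * a m :=
      le_trans (a_le_of_ge (m+1) (2*m+3) le_rfl (by omega)) ham1
    have hm1nat : 1 ≤ m := by
      by_contra hcon
      push_neg at hcon
      interval_cases m
      · rw [hMdef] at hM1; norm_num at hM1
    set d : ℕ := 58*m - 2 with hddef
    have hterm : ∀ j, a (60*m+1 + j) ≤ ((1/4:ℝ)^d * (4 * a m)) * (1/4)^j := by
      intro j
      have h := geomQ (d + j)
      rw [show 2*m+3+(d+j) = 60*m+1+j from by omega] at h
      calc a (60*m+1+j) ≤ (1/4:ℝ)^(d+j) * a (2*m+3) := h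
        _ ≤ (1/4:ℝ)^(d+j) * (4 * a m) := mul_le_mul_of_nonneg_left hai0 (by positivity)
        _ = ((1/4:ℝ)^d * (4 * a m)) * (1/4)^j := by rw [pow_add]; ring
    have hsubB : (Finset.range (n + 1)).filter (fun i : ℕ => 60 * (m : ℝ) < (i : ℝ))
        ⊆ Finset.Ico (60*m+1) (n+1) := by
      intro i hi
      rw [Finset.mem_filter, Finset.mem_range] at hi
      rw [Finset.mem_Ico]
      have : ((60*m:ℕ):ℝ) < (i:ℝ) := by push_cast; linarith [hi.2]
      have : 60*m < i := by exact_mod_cast this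
      omega
    have hsumB : (∑ i ∈ (Finset.range (n + 1)).filter (fun i : ℕ => 60 * (m : ℝ) < (i : ℝ)), a i)
        ≤ ∑ i ∈ Finset.Ico (60*m+1) (n+1), a i :=
      Finset.sum_le_sum_of_subset_of_nonneg hsubB (fun i _ _ => ha_nonneg i)
    have hsumB2 : (∑ i ∈ Finset.Ico (60*m+1) (n+1), a i)
        ≤ ((1/4:ℝ)^d * (4 * a m)) * (4/3) := by
      rw [Finset.sum_Ico_eq_sum_range]
      calc (∑ j ∈ Finset.range (n+1 - (60*m+1)), a (60*m+1 + j))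
          ≤ ∑ j ∈ Finset.range (n+1 - (60*m+1)), ((1/4:ℝ)^d * (4 * a m)) * (1/4)^j :=
            Finset.sum_le_sum (fun j _ => hterm j)
        _ = ((1/4:ℝ)^d * (4 * a m)) * ∑ j ∈ Finset.range (n+1 - (60*m+1)), ((1:ℝ)/4)^j := by
            rw [Finset.mul_sum]
        _ ≤ ((1/4:ℝ)^d * (4 * a m)) * (4/3) :=
            mul_le_mul_of_nonneg_left (geom_series_le _) (by positivity)
    -- numeric bound
    have hexp3 : Real.exp 3 ≤ 21 := by
      have h1 : Real.exp 3 = (Real.exp 1)^3 := by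
        rw [← Real.exp_nat_mul]; norm_num
      rw [h1]
      have h2 : (Real.exp 1)^3 ≤ (2.7182818286:ℝ)^3 :=
        pow_le_pow_left₀ (Real.exp_pos 1).le Real.exp_one_lt_d9.le 3
      refine h2.trans ?_
      norm_num
    have hexp_ub : Real.exp (12*(M+1)/5) ≤ (21:ℝ)^(m+1) := by
      have h1 : Real.exp (12*(M+1)/5) ≤ Real.exp (3*(M+1)) := by
        apply Real.exp_le_exp.mpr
        linarith
      have h2 : Real.exp (3*(M+1)) = (Real.exp 3)^(m+1) := by
        rw [← Real.exp_nat_mul]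
        congr 1
        rw [hMdef]
        push_cast
        ring
      rw [h2] at h1
      exact h1.trans (pow_le_pow_left₀ (Real.exp_pos 3).le hexp3 (m+1))
    have h4d : (6:ℝ)*21^(m+1) ≤ 4^d := by
      have h21 : (21:ℝ)^(m+1) ≤ 64^(m+1) := pow_le_pow_left₀ (by norm_num) (by norm_num) _
      have h64 : (64:ℝ)^(m+1) = 4^(3*(m+1)) := by rw [pow_mul]; norm_num
      have h4mono : (4:ℝ)^(3*(m+1)+2) ≤ 4^d := by
        apply pow_le_pow_right₀ (by norm_num)
        omega
      calc (6:ℝ)*21^(m+1) ≤ 6*64^(m+1) := by linarith [h21]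
        _ = 6*4^(3*(m+1)) := by rw [h64]
        _ ≤ 16*4^(3*(m+1)) := by linarith [(pow_pos (show (0:ℝ) < 4 by norm_num) (3*(m+1))).le]
        _ = 4^(3*(m+1)+2) := by rw [pow_add]; ring
        _ ≤ 4^d := h4mono
    have hfinalB : (1/4:ℝ)^d * (4*(4/3)) ≤ Real.exp (Real.log n * (-1/5)) := by
      have hA1 : (1/4:ℝ)^d * (4*(4/3)) ≤ (6:ℝ)/4^d := by
        have hp : (0:ℝ) < 4^d := pow_pos (by norm_num) d
        have h14 : ((1:ℝ)/4)^d = 1/4^d := by rw [div_pow, one_pow]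
        rw [h14, div_mul_eq_mul_div]
        exact (div_le_div_iff_of_pos_right hp).mpr (by norm_num)
      have hA2 : (6:ℝ)/4^d ≤ 1/(21:ℝ)^(m+1) := by
        rw [div_le_div_iff₀ (by positivity) (by positivity)]
        linarith [h4d]
      have hA3 : (1:ℝ)/(21:ℝ)^(m+1) ≤ Real.exp (-(12*(M+1)/5)) := by
        rw [Real.exp_neg, one_div]
        exact inv_anti₀ (Real.exp_pos _) hexp_ub
      have hA4 : Real.exp (-(12*(M+1)/5)) ≤ Real.exp (Real.log n * (-1/5)) := by
        apply Real.exp_le_exp.mpr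
        linarith [hMlog]
      linarith
    have hrpow : (n : ℝ) ^ (-(1:ℝ)/5) = Real.exp (Real.log n * (-1/5)) := by
      rw [Real.rpow_def_of_pos hn0]
    calc (∑ i ∈ (Finset.range (n + 1)).filter (fun i : ℕ => 60 * (m : ℝ) < (i : ℝ)), a i)
        ≤ ((1/4:ℝ)^d * (4 * a m)) * (4/3) := le_trans hsumB hsumB2
      _ = ((1/4:ℝ)^d * (4*(4/3))) * a m := by ring
      _ ≤ Real.exp (Real.log n * (-1/5)) * a m :=
          mul_le_mul_of_nonneg_right hfinalB (ha_nonneg m)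
      _ = (n : ℝ) ^ (-(1:ℝ)/5) * a m := by rw [hrpow]
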